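/- Let p be a prime number, l ≥ 1, and set n = p^l. Let α be a type with decidable equality, m a natural number, F a function from (Fin m → α) to the natural numbers, and s : Fin m → Multiset α a family of multisets each having exactly n elements. Call a matrix M : Fin m → Fin n → α admissible if for every i the multiset of entries of the i-th row of M equals s(i), and assume the set of admissible matrices is finite. If for some index i the multiset s(i) is not homogeneous, then p divides the sum, over all admissible matrices M, of the products ∏_{j : Fin n} F(column j of M), where column j of M is the function i ↦ M(i)(j). -/

import Mathlib

lemma aux_pgroup_sum_dvd {p : ℕ} (hp : p.Prime) {G X : Type*} [Group G] [Fintype G]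
    [Fintype X] [MulAction G X] (hG : IsPGroup p G)
    (f : X → ℕ) (hf : ∀ (g : G) (x : X), f (g • x) = f x)
    (hfix : ∀ x : X, ∃ g : G, g • x ≠ x) :
    p ∣ ∑ x : X, f x := by
  classical
  haveI : Fact p.Prime := ⟨hp⟩
  obtain ⟨e, he⟩ := IsPGroup.iff_card.mp hG
  rw [← Finset.sum_fiberwise Finset.univ
      (fun x => (Quotient.mk (MulAction.orbitRel G X) x)) f]
  apply Finset.dvd_sum
  intro q _
  set b := q.out with hb
  have hqb : Quotient.mk (MulAction.orbitRel G X) b = q := Quotient.out_eq q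
  have hmem : ∀ x : X, (Quotient.mk (MulAction.orbitRel G X) x = q) ↔
      x ∈ MulAction.orbit G b := by
    intro x
    rw [← hqb, Quotient.eq]
    exact Iff.rfl
  have hfilter : (Finset.univ.filter fun x => Quotient.mk (MulAction.orbitRel G X) x = q)
      = (MulAction.orbit G b).toFinset := by
    ext x
    simp [hmem x]
  rw [hfilter]
  have hconst : ∀ x ∈ (MulAction.orbit G b).toFinset, f x = f b := by
    intro x hx
    rw [Set.mem_toFinset] at hx
    obtain ⟨g, rfl⟩ := hx
    exact hf g b
  rw [Finset.sum_congr rfl hconst, Finset.sum_const, smul_eq_mul]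
  apply Dvd.dvd.mul_right
  have hcard : (MulAction.orbit G b).toFinset.card = Fintype.card (MulAction.orbit G b) :=
    Set.toFinset_card _
  have hdvd : Fintype.card (MulAction.orbit G b) ∣ p ^ e := by
    rw [← he, Nat.card_eq_fintype_card]
    exact Dvd.intro _ (MulAction.card_orbit_mul_card_stabilizer_eq_card_group G b)
  obtain ⟨d, _, hd⟩ := (Nat.dvd_prime_pow hp).mp hdvd
  rcases Nat.eq_zero_or_pos d with hd0 | hd1
  · exfalso
    have h1 : Fintype.card (MulAction.orbit G b) = 1 := by rw [hd, hd0, pow_zero]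
    have hfp : b ∈ MulAction.fixedPoints G X :=
      (MulAction.mem_fixedPoints_iff_card_orbit_eq_one).mpr h1
    obtain ⟨g, hg⟩ := hfix b
    exact hg (hfp g)
  · rw [hcard, hd]
    exact dvd_pow_self p (by omega)

lemma aux_ofFn_comp_perm {α : Type*} {n : ℕ} (g : Fin n → α) (σ : Equiv.Perm (Fin n)) :
    ((List.ofFn (fun j => g (σ j)) : List α) : Multiset α)
      = ((List.ofFn g : List α) : Multiset α) := by
  have key : ∀ h : Fin n → α,
      ((List.ofFn h : List α) : Multiset α) = Multiset.map h Finset.univ.val := by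
    intro h
    rw [List.ofFn_eq_map]
    rfl
  rw [key, key]
  have h2 : Multiset.map (fun j => g (σ j)) Finset.univ.val
      = Multiset.map g (Multiset.map (⇑σ) Finset.univ.val) := by
    rw [Multiset.map_map]; rfl
  rw [h2]
  congr 1
  have h3 : Multiset.map (⇑σ) Finset.univ.val = (Finset.univ.map σ.toEmbedding).val := rfl
  rw [h3, Finset.map_univ_equiv]

open Fin.NatCast Fin.CommRing

theorem board_sum_vanishes_of_not_homogeneous {α : Type*} [DecidableEq α]
    (p : ℕ) (hp : p.Prime) (l : ℕ) (hl : 1 ≤ l) (n : ℕ) (hn : n = p ^ l)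
    (m : ℕ) (F : (Fin m → α) → ℕ) (s : Fin m → Multiset α)
    (hcard : ∀ i, Multiset.card (s i) = n)
    (hfin : {M : Fin m → Fin n → α |
      ∀ i, ((List.ofFn (M i) : List α) : Multiset α) = s i}.Finite)
    (i : Fin m) (hnothom : ¬ ∃ (k : ℕ) (a : α), s i = Multiset.replicate k a) :
    p ∣ ∑ M ∈ hfin.toFinset, ∏ j : Fin n, F (fun i' => M i' j) := by
  classical
  have hp2 := hp.two_le
  have hnpos : 0 < n := by rw [hn]; positivity
  obtain ⟨n', rfl⟩ : ∃ n', n = n' + 1 := ⟨n - 1, by omega⟩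
  set ρ : Equiv.Perm (Fin (n' + 1)) := finRotate (n' + 1) with hρ
  set E : (Fin m → Fin (n' + 1) → α) ≃ (Fin m → Fin (n' + 1) → α) :=
    Equiv.piCongrRight (fun _ => Equiv.arrowCongr ρ.symm (Equiv.refl α)) with hEdef
  have hE : ∀ M (i' : Fin m) j, E M i' j = M i' (ρ j) := by
    intro M i' j
    simp [hEdef, Equiv.arrowCongr, Equiv.piCongrRight]
  have hmemS : ∀ M, M ∈ hfin.toFinset ↔
      ∀ i', ((List.ofFn (M i') : List α) : Multiset α) = s i' := by
    intro M; rw [Set.Finite.mem_toFinset]; rfl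
  have hiff : ∀ M, M ∈ hfin.toFinset ↔ E M ∈ hfin.toFinset := by
    intro M
    rw [hmemS, hmemS]
    constructor
    · intro h i'
      have : (fun j => E M i' j) = fun j => M i' (ρ j) := funext fun j => hE M i' j
      rw [show E M i' = fun j => M i' (ρ j) from this, aux_ofFn_comp_perm]
      exact h i'
    · intro h i'
      have h2 := h i'
      rw [show E M i' = fun j => M i' (ρ j) from funext fun j => hE M i' j] at h2
      have h3 := aux_ofFn_comp_perm (fun j => M i' (ρ j)) ρ.symm
      simp only [Equiv.apply_symm_apply] at h3
      exact h3.trans h2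
  set X := {M // M ∈ hfin.toFinset} with hX
  set σ : Equiv.Perm X := Equiv.subtypeEquiv E hiff with hσdef
  have hσ : ∀ (x : X) (i' : Fin m) j, (σ x).1 i' j = x.1 i' (ρ j) := by
    intro x i' j
    exact hE x.1 i' j
  -- power formula
  have hρpow : ∀ (k : ℕ) (j : Fin (n' + 1)), (ρ ^ k) j = j + (k : Fin (n' + 1)) := by
    intro k
    induction k with
    | zero => intro j; simp
    | succ k ih =>
      intro j
      rw [pow_succ, Equiv.Perm.mul_apply, hρ]
      rw [finRotate_succ_apply, ih]
      push_cast
      ring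
  have hpow : ∀ (k : ℕ) (x : X) (i' : Fin m) (j), ((σ ^ k) x).1 i' j = x.1 i' ((ρ ^ k) j) := by
    intro k
    induction k with
    | zero => intro x i' j; simp
    | succ k ih =>
      intro x i' j
      rw [pow_succ', Equiv.Perm.mul_apply, hσ, ih, ← Equiv.Perm.mul_apply, ← pow_succ]
  have hσn : σ ^ (n' + 1) = 1 := by
    apply Equiv.ext
    intro x
    apply Subtype.ext
    funext i' j
    rw [hpow, hρpow]
    simp [Fin.natCast_self]
  -- p-group
  have hσpl : σ ^ (p ^ l) = 1 := by rw [← hn]; exact hσn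
  have hG : IsPGroup p (Subgroup.zpowers σ) := by
    intro g
    refine ⟨l, ?_⟩
    obtain ⟨z, hz⟩ := Subgroup.mem_zpowers_iff.mp g.2
    apply Subtype.ext
    push_cast
    show (g : Equiv.Perm X) ^ (p ^ l) = 1
    rw [← hz, ← zpow_natCast, ← zpow_mul, mul_comm, zpow_mul, zpow_natCast, hσpl, one_zpow]
  -- no fixed points
  have hfix : ∀ x : X, σ x ≠ x := by
    intro x hx
    have hcol : ∀ (i' : Fin m) j, x.1 i' (ρ j) = x.1 i' j := by
      intro i' j
      conv_rhs => rw [← hx]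
      exact (hσ x i' j).symm
    have hstep : ∀ j, x.1 i (j + 1) = x.1 i j := by
      intro j
      have := hcol i j
      rwa [hρ, finRotate_succ_apply] at this
    have hconst : ∀ (k : ℕ), x.1 i (k : Fin (n' + 1)) = x.1 i 0 := by
      intro k
      induction k with
      | zero => norm_num
      | succ k ih =>
        have hc : ((k + 1 : ℕ) : Fin (n' + 1)) = (k : Fin (n' + 1)) + 1 := by push_cast; ring
        rw [hc, hstep, ih]
    have hrow : x.1 i = fun _ => x.1 i 0 := by
      funext j
      conv_lhs => rw [← Fin.cast_val_eq_self j]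
      exact hconst j.val
    apply hnothom
    refine ⟨n' + 1, x.1 i 0, ?_⟩
    have hsi := (hmemS x.1).mp x.2 i
    rw [← hsi, hrow, List.ofFn_const, Multiset.coe_replicate]
  -- invariant function
  set f : X → ℕ := fun x => ∏ j : Fin (n' + 1), F (fun i' => x.1 i' j) with hfdef
  have hfσ : ∀ x : X, f (σ x) = f x := by
    intro x
    have h1 : f (σ x) = ∏ j : Fin (n' + 1), F (fun i' => x.1 i' (ρ j)) := by
      refine Finset.prod_congr rfl fun j _ => ?_
      rw [show (fun i' => (σ x).1 i' j) = fun i' => x.1 i' (ρ j) from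
        funext fun i' => hσ x i' j]
    rw [h1]
    exact Equiv.prod_comp ρ (fun j => F (fun i' => x.1 i' j))
  have hnat : ∀ (k : ℕ) (x : X), f ((σ ^ k) x) = f x := by
    intro k
    induction k with
    | zero => intro x; simp
    | succ k ih =>
      intro x
      rw [pow_succ, Equiv.Perm.mul_apply, ih (σ x), hfσ x]
  have hint : ∀ (z : ℤ) (x : X), f ((σ ^ z) x) = f x := by
    intro z x
    cases z with
    | ofNat k => rw [Int.ofNat_eq_coe, zpow_natCast]; exact hnat k x
    | negSucc k =>
      rw [zpow_negSucc]
      have h1 := hnat (k + 1) ((σ ^ (k + 1))⁻¹ x)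
      rw [← Equiv.Perm.mul_apply, mul_inv_cancel, Equiv.Perm.one_apply] at h1
      exact h1.symm
  have hfg : ∀ (g : Subgroup.zpowers σ) (x : X), f (g • x) = f x := by
    rintro ⟨g, hg⟩ x
    obtain ⟨z, rfl⟩ := Subgroup.mem_zpowers_iff.mp hg
    exact hint z x
  have hfix' : ∀ x : X, ∃ g : Subgroup.zpowers σ, g • x ≠ x := by
    intro x
    exact ⟨⟨σ, Subgroup.mem_zpowers σ⟩, hfix x⟩
  have hsum : ∑ M ∈ hfin.toFinset, ∏ j : Fin (n' + 1), F (fun i' => M i' j)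
      = ∑ x : X, f x := by
    rw [← Finset.sum_coe_sort hfin.toFinset (fun M => ∏ j : Fin (n' + 1), F (fun i' => M i' j))]
  rw [hsum]
  exact aux_pgroup_sum_dvd hp hG f hfg hfix'
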